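/- arXiv:1704.05168 — 2 statements merged into one kernel-verified Lean document; each statement's English description precedes it below -/
import Mathlib

section
/- Let w > 0 be an integer, k < 0 rational, λ real, 0 < q < 1. Define A⁺_λ(q) = ∑_{ℓ=0}^{∞} ∑_{m=0}^{∞} [q^{-(λ - 2w(ℓ+m))²/(4k)} - q^{-(λ + 2w(ℓ+m+1))²/(4k)}] (absolutely convergent double sum). Then A⁺_λ(q) = ∑_{n=0}^{∞} (n+1)[q^{-(λ-2wn)²/(4k)} - q^{-(λ+2w(n+1))²/(4k)}] = Θ'_{λ}(q) + (λ/2w)Θ_{λ}(q) + ∑_{n=0}^{∞} q^{-(λ-2wn)²/(4k)}, where Θ and Θ' are as above. -/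
open Filter Asymptotics

def diagEquiv : (ℕ × ℕ) ≃ Σ n : ℕ, Fin (n + 1) where
  toFun p := ⟨p.1 + p.2, ⟨p.1, by omega⟩⟩
  invFun s := (s.2.1, s.1 - s.2.1)
  left_inv p := by ext <;> simp
  right_inv := by
    rintro ⟨n, i⟩
    have h : (i : ℕ) + (n - (i : ℕ)) = n := by omega
    refine Sigma.ext (by simpa using h) ?_
    rw [Fin.heq_ext_iff (by simpa using h)]

lemma aux_summable (q t a b : ℝ) (hq0 : 0 < q) (hq1 : q < 1) (ht : 0 < t) (hb : b ≠ 0) :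
    Summable (fun n : ℕ => ((n : ℝ) + 1) * q ^ (t * (a + b * n) ^ 2)) := by
  have hmaj : Summable (fun n : ℕ => ((n : ℝ) + 1) * q ^ n) := by
    have h1 : Summable (fun n : ℕ => (n : ℝ) ^ 1 * q ^ n) :=
      summable_pow_mul_geometric_of_norm_lt_one 1
        (by rw [Real.norm_eq_abs, abs_of_pos hq0]; exact hq1)
    have h2 : Summable (fun n : ℕ => q ^ n) := summable_geometric_of_lt_one hq0.le hq1
    simpa [add_mul, pow_one] using h1.add h2
  refine summable_of_isBigO_nat hmaj (IsBigO.of_bound 1 ?_)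
  have hpoly : Tendsto (fun x : ℝ => t * (a + b * x) ^ 2 - x) atTop atTop := by
    have h1 : Tendsto (fun x : ℝ => t * b ^ 2 * x + (2 * t * a * b - 1)) atTop atTop := by
      apply tendsto_atTop_add_const_right
      exact Tendsto.const_mul_atTop (by positivity) tendsto_id
    have h2 : Tendsto (fun x : ℝ => x * (t * b ^ 2 * x + (2 * t * a * b - 1)) + t * a ^ 2)
        atTop atTop := tendsto_atTop_add_const_right _ _ (tendsto_id.atTop_mul_atTop₀ h1)
    convert h2 using 2 with x
    ring
  have hev : ∀ᶠ n : ℕ in atTop, (n : ℝ) ≤ t * (a + b * (n : ℝ)) ^ 2 := by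
    have := tendsto_natCast_atTop_atTop (R := ℝ) |>.eventually (hpoly.eventually_ge_atTop 0)
    filter_upwards [this] with n hn
    simpa using hn
  filter_upwards [hev] with n hn
  have h1 : q ^ (t * (a + b * (n : ℝ)) ^ 2) ≤ q ^ ((n : ℝ)) :=
    Real.rpow_le_rpow_of_exponent_ge hq0 hq1.le hn
  rw [Real.rpow_natCast] at h1
  have hq' : (0:ℝ) ≤ q ^ (t * (a + b * (n : ℝ)) ^ 2) := Real.rpow_nonneg hq0.le _
  have hn1 : (0:ℝ) ≤ (n:ℝ) + 1 := by positivity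
  rw [one_mul, Real.norm_eq_abs, Real.norm_eq_abs, abs_of_nonneg (by positivity),
    abs_of_nonneg (by positivity)]
  exact mul_le_mul_of_nonneg_left h1 hn1

/-- The lattice theta function of `L = 2wℤ`, specialized at `z = 1`. -/
noncomputable def Th (w : ℤ) (k : ℚ) (q μ : ℝ) : ℝ :=
  ∑' ℓ : ℤ, q ^ (-(μ - 2 * (w : ℝ) * (ℓ : ℝ)) ^ 2 / (4 * (k : ℝ)))

/-- The specialized derivative theta function of `L = 2wℤ` at `z = 1`. -/
noncomputable def Th' (w : ℤ) (k : ℚ) (q μ : ℝ) : ℝ :=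
  (∑' ℓ : ℤ, (ℓ : ℝ) * q ^ (-(μ - 2 * (w : ℝ) * (ℓ : ℝ)) ^ 2 / (4 * (k : ℝ))))
    - (μ / (2 * (w : ℝ))) * Th w k q μ

theorem stmt10 (w : ℤ) (hw : 0 < w) (k : ℚ) (hk : k < 0)
    (lam q : ℝ) (hq0 : 0 < q) (hq1 : q < 1) :
    Summable (fun p : ℕ × ℕ =>
        q ^ (-(lam - 2 * (w : ℝ) * ((p.1 : ℝ) + (p.2 : ℝ))) ^ 2 / (4 * (k : ℝ)))
          - q ^ (-(lam + 2 * (w : ℝ) * ((p.1 : ℝ) + (p.2 : ℝ) + 1)) ^ 2 / (4 * (k : ℝ)))) ∧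
    (∑' ℓ : ℕ, ∑' m : ℕ,
        (q ^ (-(lam - 2 * (w : ℝ) * ((ℓ : ℝ) + (m : ℝ))) ^ 2 / (4 * (k : ℝ)))
          - q ^ (-(lam + 2 * (w : ℝ) * ((ℓ : ℝ) + (m : ℝ) + 1)) ^ 2 / (4 * (k : ℝ)))))
      = ∑' n : ℕ, ((n : ℝ) + 1) *
          (q ^ (-(lam - 2 * (w : ℝ) * (n : ℝ)) ^ 2 / (4 * (k : ℝ)))
            - q ^ (-(lam + 2 * (w : ℝ) * ((n : ℝ) + 1)) ^ 2 / (4 * (k : ℝ)))) ∧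
    (∑' n : ℕ, ((n : ℝ) + 1) *
          (q ^ (-(lam - 2 * (w : ℝ) * (n : ℝ)) ^ 2 / (4 * (k : ℝ)))
            - q ^ (-(lam + 2 * (w : ℝ) * ((n : ℝ) + 1)) ^ 2 / (4 * (k : ℝ)))))
      = Th' w k q lam + (lam / (2 * (w : ℝ))) * Th w k q lam
          + ∑' n : ℕ, q ^ (-(lam - 2 * (w : ℝ) * (n : ℝ)) ^ 2 / (4 * (k : ℝ))) := by
  have hw' : (0:ℝ) < (w:ℝ) := by exact_mod_cast hw
  have hk' : (k:ℝ) < 0 := by exact_mod_cast hk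
  have hk0 : (k:ℝ) ≠ 0 := ne_of_lt hk'
  set t : ℝ := (-(4 * (k:ℝ)))⁻¹ with hts
  have ht : 0 < t := by rw [hts]; rw [inv_pos]; linarith
  have hexp : ∀ x : ℝ, -x ^ 2 / (4 * (k:ℝ)) = t * x ^ 2 := by
    intro x; rw [hts]; field_simp
  simp only [hexp, Th, Th']
  -- summability of the basic one-parameter families
  have hS1 : Summable (fun n : ℕ => ((n:ℝ)+1) * q ^ (t * (lam - 2*(w:ℝ)*(n:ℝ)) ^ 2)) :=
    (aux_summable q t lam (-(2*(w:ℝ))) hq0 hq1 ht (by linarith)).congr fun n => by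
      rw [show t * (lam + -(2*(w:ℝ)) * (n:ℝ)) ^ 2 = t * (lam - 2*(w:ℝ)*(n:ℝ)) ^ 2 by ring]
  have hS2 : Summable (fun n : ℕ => ((n:ℝ)+1) * q ^ (t * (lam + 2*(w:ℝ)*((n:ℝ)+1)) ^ 2)) :=
    (aux_summable q t (lam + 2*(w:ℝ)) (2*(w:ℝ)) hq0 hq1 ht (by linarith)).congr fun n => by
      rw [show t * (lam + 2*(w:ℝ) + 2*(w:ℝ) * (n:ℝ)) ^ 2
            = t * (lam + 2*(w:ℝ)*((n:ℝ)+1)) ^ 2 by ring]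
  have h1 : Summable (fun n : ℕ => q ^ (t * (lam - 2*(w:ℝ)*(n:ℝ)) ^ 2)) :=
    Summable.of_nonneg_of_le (fun n => by positivity)
      (fun n => le_mul_of_one_le_left (by positivity)
        (le_add_of_nonneg_left (Nat.cast_nonneg n))) hS1
  have h2 : Summable (fun n : ℕ => q ^ (t * (lam + 2*(w:ℝ)*((n:ℝ)+1)) ^ 2)) :=
    Summable.of_nonneg_of_le (fun n => by positivity)
      (fun n => le_mul_of_one_le_left (by positivity)
        (le_add_of_nonneg_left (Nat.cast_nonneg n))) hS2
  have hn1 : Summable (fun n : ℕ => (n:ℝ) * q ^ (t * (lam - 2*(w:ℝ)*(n:ℝ)) ^ 2)) :=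
    Summable.of_nonneg_of_le (fun n => by positivity)
      (fun n => mul_le_mul_of_nonneg_right (by linarith) (by positivity)) hS1
  -- sigma-type summability
  have hsig1 : Summable (fun s : Σ n : ℕ, Fin (n+1) =>
      q ^ (t * (lam - 2*(w:ℝ)*(s.1:ℝ)) ^ 2)) := by
    rw [summable_sigma_of_nonneg (fun s => by positivity)]
    refine ⟨fun n => (hasSum_fintype _).summable, hS1.congr fun n => ?_⟩
    rw [tsum_fintype]
    simp [Finset.sum_const, Finset.card_univ, nsmul_eq_mul]
  have hsig2 : Summable (fun s : Σ n : ℕ, Fin (n+1) =>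
      q ^ (t * (lam + 2*(w:ℝ)*((s.1:ℝ)+1)) ^ 2)) := by
    rw [summable_sigma_of_nonneg (fun s => by positivity)]
    refine ⟨fun n => (hasSum_fintype _).summable, hS2.congr fun n => ?_⟩
    rw [tsum_fintype]
    simp [Finset.sum_const, Finset.card_univ, nsmul_eq_mul]
  -- product summability
  have hprod1 : Summable (fun p : ℕ × ℕ =>
      q ^ (t * (lam - 2*(w:ℝ)*((p.1:ℝ)+(p.2:ℝ))) ^ 2)) := by
    refine ((Equiv.summable_iff diagEquiv).2 hsig1).congr fun p => ?_
    simp only [Function.comp, diagEquiv, Equiv.coe_fn_mk]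
    push_cast
    ring_nf
  have hprod2 : Summable (fun p : ℕ × ℕ =>
      q ^ (t * (lam + 2*(w:ℝ)*((p.1:ℝ)+(p.2:ℝ)+1)) ^ 2)) := by
    refine ((Equiv.summable_iff diagEquiv).2 hsig2).congr fun p => ?_
    simp only [Function.comp, diagEquiv, Equiv.coe_fn_mk]
    push_cast
    ring_nf
  have hF : Summable (fun p : ℕ × ℕ =>
      q ^ (t * (lam - 2*(w:ℝ)*((p.1:ℝ)+(p.2:ℝ))) ^ 2)
        - q ^ (t * (lam + 2*(w:ℝ)*((p.1:ℝ)+(p.2:ℝ)+1)) ^ 2)) := hprod1.sub hprod2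
  refine ⟨hF, ?_, ?_⟩
  · -- double sum = diagonal sum
    have e0 : (∑' ℓ : ℕ, ∑' m : ℕ,
        (q ^ (t * (lam - 2*(w:ℝ)*((ℓ:ℝ)+(m:ℝ))) ^ 2)
          - q ^ (t * (lam + 2*(w:ℝ)*((ℓ:ℝ)+(m:ℝ)+1)) ^ 2)))
        = ∑' p : ℕ × ℕ, (q ^ (t * (lam - 2*(w:ℝ)*((p.1:ℝ)+(p.2:ℝ))) ^ 2)
          - q ^ (t * (lam + 2*(w:ℝ)*((p.1:ℝ)+(p.2:ℝ)+1)) ^ 2)) := (Summable.tsum_prod hF).symm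
    rw [e0]
    have e1 : (∑' p : ℕ × ℕ, (q ^ (t * (lam - 2*(w:ℝ)*((p.1:ℝ)+(p.2:ℝ))) ^ 2)
          - q ^ (t * (lam + 2*(w:ℝ)*((p.1:ℝ)+(p.2:ℝ)+1)) ^ 2)))
        = ∑' s : Σ n : ℕ, Fin (n+1), (q ^ (t * (lam - 2*(w:ℝ)*(s.1:ℝ)) ^ 2)
          - q ^ (t * (lam + 2*(w:ℝ)*((s.1:ℝ)+1)) ^ 2)) := by
      rw [← Equiv.tsum_eq diagEquiv]
      refine tsum_congr fun p => ?_
      simp only [diagEquiv, Equiv.coe_fn_mk]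
      push_cast
      ring_nf
    rw [e1, Summable.tsum_sigma (hsig1.sub hsig2)]
    refine tsum_congr fun n => ?_
    rw [tsum_fintype]
    simp [Finset.sum_const, Finset.card_univ, nsmul_eq_mul, mul_sub]
  · -- evaluation in terms of theta functions
    have hnat1 : Summable (fun n : ℕ =>
        (((n:ℤ)):ℝ) * q ^ (t * (lam - 2*(w:ℝ)*(((n:ℤ)):ℝ)) ^ 2)) := by
      refine hn1.congr fun n => ?_
      push_cast
      ring_nf
    have hnat2 : Summable (fun n : ℕ =>
        (((-((n:ℤ)+1)) : ℤ):ℝ) * q ^ (t * (lam - 2*(w:ℝ)*(((-((n:ℤ)+1)) : ℤ):ℝ)) ^ 2)) := by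
      refine (hS2.neg).congr fun n => ?_
      rw [show t * (lam + 2*(w:ℝ)*((n:ℝ)+1)) ^ 2
            = t * (lam - 2*(w:ℝ)*(((-((n:ℤ)+1)) : ℤ):ℝ)) ^ 2 by push_cast; ring]
      push_cast
      ring
    have hz : (∑' ℓ : ℤ, (ℓ:ℝ) * q ^ (t * (lam - 2*(w:ℝ)*(ℓ:ℝ)) ^ 2))
        = (∑' n : ℕ, (n:ℝ) * q ^ (t * (lam - 2*(w:ℝ)*(n:ℝ)) ^ 2))
          - ∑' n : ℕ, ((n:ℝ)+1) * q ^ (t * (lam + 2*(w:ℝ)*((n:ℝ)+1)) ^ 2) := by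
      rw [tsum_of_nat_of_neg_add_one
        (f := fun ℓ : ℤ => (ℓ:ℝ) * q ^ (t * (lam - 2*(w:ℝ)*(ℓ:ℝ)) ^ 2)) hnat1 hnat2]
      have c1 : (∑' n : ℕ, (((n:ℤ)):ℝ) * q ^ (t * (lam - 2*(w:ℝ)*(((n:ℤ)):ℝ)) ^ 2))
          = ∑' n : ℕ, (n:ℝ) * q ^ (t * (lam - 2*(w:ℝ)*(n:ℝ)) ^ 2) := by
        refine tsum_congr fun n => ?_; push_cast; ring_nf
      have c2 : (∑' n : ℕ, (((-((n:ℤ)+1)) : ℤ):ℝ) * q ^ (t * (lam - 2*(w:ℝ)*(((-((n:ℤ)+1)) : ℤ):ℝ)) ^ 2))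
          = ∑' n : ℕ, -(((n:ℝ)+1) * q ^ (t * (lam + 2*(w:ℝ)*((n:ℝ)+1)) ^ 2)) := by
        refine tsum_congr fun n => ?_
        rw [show t * (lam - 2*(w:ℝ)*(((-((n:ℤ)+1)) : ℤ):ℝ)) ^ 2
              = t * (lam + 2*(w:ℝ)*((n:ℝ)+1)) ^ 2 by push_cast; ring]
        push_cast
        ring
      rw [c1, c2, tsum_neg]
      ring
    rw [sub_add_cancel, hz]
    have lhs : (∑' n : ℕ, ((n:ℝ)+1) *
          (q ^ (t * (lam - 2*(w:ℝ)*(n:ℝ)) ^ 2) - q ^ (t * (lam + 2*(w:ℝ)*((n:ℝ)+1)) ^ 2)))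
        = (∑' n : ℕ, ((n:ℝ)+1) * q ^ (t * (lam - 2*(w:ℝ)*(n:ℝ)) ^ 2))
          - ∑' n : ℕ, ((n:ℝ)+1) * q ^ (t * (lam + 2*(w:ℝ)*((n:ℝ)+1)) ^ 2) := by
      rw [← Summable.tsum_sub hS1 hS2]
      refine tsum_congr fun n => ?_
      ring
    rw [lhs]
    have split : (∑' n : ℕ, ((n:ℝ)+1) * q ^ (t * (lam - 2*(w:ℝ)*(n:ℝ)) ^ 2))
        = (∑' n : ℕ, (n:ℝ) * q ^ (t * (lam - 2*(w:ℝ)*(n:ℝ)) ^ 2))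
          + ∑' n : ℕ, q ^ (t * (lam - 2*(w:ℝ)*(n:ℝ)) ^ 2) := by
      rw [← Summable.tsum_add hn1 h1]
      refine tsum_congr fun n => ?_
      ring
    rw [split]
    ring
end

section
/- Let w > 0 be an integer, k < 0 rational, λ real, 0 < q < 1, and define A_λ(q) = ∑_{ℓ∈ℤ} ∑_{m=0}^{∞} [q^{-(λ - 2w(ℓ+m))²/(4k)} - q^{-(λ + 2w(ℓ+m+1))²/(4k)}], where the inner sum converges absolutely for each ℓ and the outer series converges. Then A_λ(q) = 2Θ'_{λ}(q) + (1 + λ/w)·Θ_{λ}(q), where Θ_{λ}(q) = ∑_{ℓ∈ℤ} q^{-(λ-2wℓ)²/(4k)} and Θ'_{λ}(q) = -(λ/2w)Θ_{λ}(q) + ∑_{ℓ∈ℤ} ℓ·q^{-(λ-2wℓ)²/(4k)}. -/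
open Finset

/-- Summability over ℕ with a linear factor and Gaussian decay. -/
lemma auxNat {q : ℝ} (hq0 : 0 < q) (hq1 : q < 1) {a : ℝ} (ha : 0 < a) (b : ℝ) :
    Summable (fun m : ℕ => ((m : ℝ) + 1) * q ^ (a * (m : ℝ) ^ 2 + b * (m : ℝ))) := by
  set ρ : ℝ := q ^ a with hρ
  have hρ0 : 0 < ρ := Real.rpow_pos_of_pos hq0 a
  have hρ1 : ρ < 1 := Real.rpow_lt_one hq0.le hq1 ha
  set M : ℝ := (b - a) ^ 2 / (4 * a) with hM
  have key : ∀ m : ℕ, ((m : ℝ) + 1) * q ^ (a * (m : ℝ) ^ 2 + b * (m : ℝ))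
      ≤ q ^ (-M) * (((m : ℝ) + 1) * ρ ^ m) := by
    intro m
    have hexp : a * (m : ℝ) - M ≤ a * (m : ℝ) ^ 2 + b * (m : ℝ) := by
      have h4a : (0:ℝ) < 4 * a := by positivity
      have hkey : a * (m:ℝ) - (a * (m:ℝ) ^ 2 + b * (m:ℝ)) ≤ (b - a) ^ 2 / (4 * a) := by
        rw [le_div_iff₀ h4a]
        nlinarith [sq_nonneg (2 * a * (m:ℝ) + (b - a))]
      rw [hM]; linarith
    have h1 : q ^ (a * (m : ℝ) ^ 2 + b * (m : ℝ)) ≤ q ^ (a * (m : ℝ) - M) :=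
      Real.rpow_le_rpow_of_exponent_ge hq0 hq1.le hexp
    have h2 : q ^ (a * (m : ℝ) - M) = q ^ (-M) * ρ ^ m := by
      rw [show a * (m : ℝ) - M = -M + a * (m : ℝ) by ring, Real.rpow_add hq0, hρ,
        ← Real.rpow_natCast (q ^ a) m, ← Real.rpow_mul hq0.le]
    calc ((m : ℝ) + 1) * q ^ (a * (m : ℝ) ^ 2 + b * (m : ℝ))
        ≤ ((m : ℝ) + 1) * (q ^ (-M) * ρ ^ m) := by
          apply mul_le_mul_of_nonneg_left _ (by positivity)
          rw [← h2]; exact h1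
      _ = q ^ (-M) * (((m : ℝ) + 1) * ρ ^ m) := by ring
  have hs : Summable (fun m : ℕ => q ^ (-M) * (((m : ℝ) + 1) * ρ ^ m)) := by
    apply Summable.mul_left
    have h1 : Summable (fun m : ℕ => (m : ℝ) * ρ ^ m) := by
      have := summable_pow_mul_geometric_of_norm_lt_one (R := ℝ) 1
        (r := ρ) (by rw [Real.norm_eq_abs, abs_of_pos hρ0]; exact hρ1)
      simpa using this
    have h2 : Summable (fun m : ℕ => ρ ^ m) := summable_geometric_of_lt_one hρ0.le hρ1
    simpa [add_mul] using h1.add h2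
  exact Summable.of_nonneg_of_le (fun m => by positivity) key hs

/-- Summability over ℤ with a linear factor and Gaussian decay. -/
lemma auxInt {q : ℝ} (hq0 : 0 < q) (hq1 : q < 1) {a : ℝ} (ha : 0 < a) (b : ℝ) :
    Summable (fun n : ℤ => (|(n : ℝ)| + 1) * q ^ (a * (n : ℝ) ^ 2 + b * (n : ℝ))) := by
  apply Summable.of_nat_of_neg
  · have := auxNat hq0 hq1 ha b
    apply this.congr
    intro m
    simp [abs_of_nonneg (show (0:ℝ) ≤ (m:ℝ) from Nat.cast_nonneg m)]
  · have := auxNat hq0 hq1 ha (-b)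
    apply this.congr
    intro m
    push_cast
    rw [abs_neg, abs_of_nonneg (show (0:ℝ) ≤ (m:ℝ) from Nat.cast_nonneg m)]
    ring_nf

set_option maxHeartbeats 2000000 in
theorem stmt12 (w : ℤ) (hw : 0 < w) (k : ℚ) (hk : k < 0)
    (lam q : ℝ) (hq0 : 0 < q) (hq1 : q < 1) :
    (∀ ℓ : ℤ, Summable (fun m : ℕ =>
        q ^ (-(lam - 2 * (w : ℝ) * ((ℓ : ℝ) + (m : ℝ))) ^ 2 / (4 * (k : ℝ)))
          - q ^ (-(lam + 2 * (w : ℝ) * ((ℓ : ℝ) + (m : ℝ) + 1)) ^ 2 / (4 * (k : ℝ))))) ∧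
    Summable (fun ℓ : ℤ => ∑' m : ℕ,
        (q ^ (-(lam - 2 * (w : ℝ) * ((ℓ : ℝ) + (m : ℝ))) ^ 2 / (4 * (k : ℝ)))
          - q ^ (-(lam + 2 * (w : ℝ) * ((ℓ : ℝ) + (m : ℝ) + 1)) ^ 2 / (4 * (k : ℝ))))) ∧
    (∑' ℓ : ℤ, ∑' m : ℕ,
        (q ^ (-(lam - 2 * (w : ℝ) * ((ℓ : ℝ) + (m : ℝ))) ^ 2 / (4 * (k : ℝ)))
          - q ^ (-(lam + 2 * (w : ℝ) * ((ℓ : ℝ) + (m : ℝ) + 1)) ^ 2 / (4 * (k : ℝ)))))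
      = 2 * Th' w k q lam + (1 + lam / (w : ℝ)) * Th w k q lam := by
  have hw0 : (0:ℝ) < (w:ℝ) := by exact_mod_cast hw
  have hw' : (w:ℝ) ≠ 0 := hw0.ne'
  have hk' : (k:ℝ) < 0 := by exact_mod_cast hk
  set F : ℤ → ℝ := fun n : ℤ =>
    q ^ (-(lam - 2 * (w : ℝ) * (n : ℝ)) ^ 2 / (4 * (k : ℝ))) with hF
  have hFpos : ∀ n : ℤ, 0 < F n := fun n => Real.rpow_pos_of_pos hq0 _
  set c1 : ℝ := -(4 * (k:ℝ))⁻¹ with hc1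
  have hc1pos : 0 < c1 := by
    rw [hc1, neg_pos]
    exact inv_lt_zero.mpr (by linarith)
  set a : ℝ := 4 * (w:ℝ)^2 * c1 with haa
  set b : ℝ := -(4 * (w:ℝ) * lam * c1) with hb
  have hapos : 0 < a := by
    rw [haa]
    exact mul_pos (mul_pos (by norm_num) (pow_pos hw0 2)) hc1pos
  have hdecomp : ∀ n : ℤ, F n = q ^ (lam^2 * c1) * q ^ (a * (n:ℝ)^2 + b * (n:ℝ)) := by
    intro n
    simp only [hF]
    rw [← Real.rpow_add hq0]
    congr 1
    simp only [haa, hb, hc1]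
    rw [div_eq_mul_inv]
    ring
  -- master summability facts
  have hM : Summable (fun n : ℤ => (|(n:ℝ)| + 1) * F n) := by
    have := (auxInt hq0 hq1 hapos b).mul_left (q ^ (lam^2 * c1))
    apply this.congr
    intro n
    rw [hdecomp n]; ring
  have hFs : Summable F := by
    apply Summable.of_nonneg_of_le (fun n => (hFpos n).le) _ hM
    intro n
    nth_rewrite 1 [show F n = 1 * F n by ring]
    exact mul_le_mul_of_nonneg_right (by linarith [abs_nonneg ((n:ℝ))]) (hFpos n).le
  have hnFs : Summable (fun n : ℤ => (n:ℝ) * F n) := by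
    refine Summable.of_abs ?_
    apply Summable.of_nonneg_of_le (fun n => abs_nonneg _) _ hM
    intro n
    rw [abs_mul, abs_of_pos (hFpos n)]
    exact mul_le_mul_of_nonneg_right (by linarith [abs_nonneg ((n:ℝ))]) (hFpos n).le
  -- identification of the terms
  have hterm : ∀ (ℓ : ℤ) (m : ℕ),
      (q ^ (-(lam - 2 * (w : ℝ) * ((ℓ : ℝ) + (m : ℝ))) ^ 2 / (4 * (k : ℝ)))
        - q ^ (-(lam + 2 * (w : ℝ) * ((ℓ : ℝ) + (m : ℝ) + 1)) ^ 2 / (4 * (k : ℝ))))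
      = F (ℓ + m) - F (-(ℓ + m + 1)) := by
    intro ℓ m
    have h1 : F (ℓ + m)
        = q ^ (-(lam - 2 * (w : ℝ) * ((ℓ : ℝ) + (m : ℝ))) ^ 2 / (4 * (k : ℝ))) := by
      simp only [hF]; congr 1; push_cast; ring
    have h2 : F (-(ℓ + m + 1))
        = q ^ (-(lam + 2 * (w : ℝ) * ((ℓ : ℝ) + (m : ℝ) + 1)) ^ 2 / (4 * (k : ℝ))) := by
      simp only [hF]; congr 1; push_cast; ring
    rw [h1, h2]
  -- summability of the two inner pieces
  have sA : ∀ ℓ : ℤ, Summable (fun m : ℕ => F (ℓ + m)) := by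
    intro ℓ
    have := hFs.comp_injective (i := fun m : ℕ => ℓ + (m:ℤ))
      (fun x y h => by simpa using h)
    exact this
  have sB : ∀ ℓ : ℤ, Summable (fun m : ℕ => F (-(ℓ + m + 1))) := by
    intro ℓ
    have := hFs.comp_injective (i := fun m : ℕ => -(ℓ + (m:ℤ) + 1))
      (fun x y h => by simpa using h)
    exact this
  have part1 : ∀ ℓ : ℤ, Summable (fun m : ℕ =>
      q ^ (-(lam - 2 * (w : ℝ) * ((ℓ : ℝ) + (m : ℝ))) ^ 2 / (4 * (k : ℝ)))
        - q ^ (-(lam + 2 * (w : ℝ) * ((ℓ : ℝ) + (m : ℝ) + 1)) ^ 2 / (4 * (k : ℝ)))) := by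
    intro ℓ
    exact ((sA ℓ).sub (sB ℓ)).congr (fun m => (hterm ℓ m).symm)
  -- the combined kernel G
  set G : ℤ → ℤ → ℝ := fun ℓ n =>
    (if ℓ ≤ n then F n else 0) - (if ℓ ≤ -n - 1 then F n else 0) with hG
  have sg : ∀ ℓ : ℤ, Summable (fun n : ℤ => if ℓ ≤ n then F n else 0) := by
    intro ℓ
    refine Summable.of_nonneg_of_le (fun n => ?_) (fun n => ?_) hFs
    · split_ifs
      · exact (hFpos n).le
      · exact le_rfl
    · split_ifs
      · exact le_rfl
      · exact (hFpos n).le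
  have sg' : ∀ ℓ : ℤ, Summable (fun n : ℤ => if ℓ ≤ -n - 1 then F n else 0) := by
    intro ℓ
    refine Summable.of_nonneg_of_le (fun n => ?_) (fun n => ?_) hFs
    · split_ifs
      · exact (hFpos n).le
      · exact le_rfl
    · split_ifs
      · exact le_rfl
      · exact (hFpos n).le
  have hGsumm : ∀ ℓ : ℤ, Summable (G ℓ) := fun ℓ => (sg ℓ).sub (sg' ℓ)
  -- support of G in the ℓ variable is finite
  have hGsupp : ∀ (n ℓ : ℤ), ℓ ∉ Finset.Icc (-(n.natAbs : ℤ)) (n.natAbs : ℤ) → G ℓ n = 0 := by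
    intro n ℓ hℓ
    rw [Finset.mem_Icc] at hℓ
    simp only [hG]
    split_ifs <;> first | exact sub_self _ | (exfalso; omega)
  have hGcol : ∀ n : ℤ, Summable (fun ℓ : ℤ => G ℓ n) := by
    intro n
    exact summable_of_ne_finset_zero (s := Finset.Icc (-(n.natAbs : ℤ)) (n.natAbs : ℤ))
      (fun ℓ hℓ => hGsupp n ℓ hℓ)
  have hGabsle : ∀ (n ℓ : ℤ), |G ℓ n| ≤ F n := by
    intro n ℓ
    simp only [hG]
    have := (hFpos n).le
    split_ifs <;> simp [abs_of_nonneg, this]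
  -- summability of G over the product
  have hGuncurry : Summable (Function.uncurry G) := by
    have habs : Summable (fun p : ℤ × ℤ => |G p.2 p.1|) := by
      rw [summable_prod_of_nonneg (fun p => abs_nonneg _)]
      constructor
      · intro n
        exact summable_of_ne_finset_zero
          (s := Finset.Icc (-(n.natAbs : ℤ)) (n.natAbs : ℤ))
          (fun ℓ hℓ => by rw [hGsupp n ℓ hℓ, abs_zero])
      · refine Summable.of_nonneg_of_le
          (fun n => tsum_nonneg (fun ℓ => abs_nonneg _)) (fun n => ?_) (hM.mul_left 2)
        have hsum : ∑' ℓ : ℤ, |G ℓ n|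
            = ∑ ℓ ∈ Finset.Icc (-(n.natAbs : ℤ)) (n.natAbs : ℤ), |G ℓ n| :=
          tsum_eq_sum (fun ℓ hℓ => by rw [hGsupp n ℓ hℓ, abs_zero])
        rw [hsum]
        calc ∑ ℓ ∈ Finset.Icc (-(n.natAbs : ℤ)) (n.natAbs : ℤ), |G ℓ n|
            ≤ ∑ _ℓ ∈ Finset.Icc (-(n.natAbs : ℤ)) (n.natAbs : ℤ), F n :=
              Finset.sum_le_sum (fun ℓ _ => hGabsle n ℓ)
          _ = ((2 * n.natAbs + 1 : ℕ) : ℝ) * F n := by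
              have hcard : (Finset.Icc (-(n.natAbs : ℤ)) (n.natAbs : ℤ)).card
                  = 2 * n.natAbs + 1 := by
                rw [Int.card_Icc]; omega
              rw [Finset.sum_const, hcard, nsmul_eq_mul]
          _ ≤ 2 * ((|(n:ℝ)| + 1) * F n) := by
              push_cast [Nat.cast_natAbs]
              nlinarith [abs_nonneg ((n:ℝ)), (hFpos n).le, hFpos n]
    have habs' : Summable (fun p : ℤ × ℤ => |Function.uncurry G p|) := by
      have := habs.prod_symm
      exact this
    exact habs'.of_abs
  -- evaluation of the inner (m-)sums as n-sums against G
  have hrow : ∀ ℓ : ℤ,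
      (∑' m : ℕ, (F (ℓ + m) - F (-(ℓ + m + 1)))) = ∑' n : ℤ, G ℓ n := by
    intro ℓ
    have e1 : ∑' m : ℕ, F (ℓ + m) = ∑' n : ℤ, (if ℓ ≤ n then F n else 0) := by
      have hinj : Function.Injective (fun m : ℕ => ℓ + (m : ℤ)) :=
        fun x y h => by simpa using h
      have h0 : Function.support (fun n : ℤ => if ℓ ≤ n then F n else 0)
          ⊆ Set.range (fun m : ℕ => ℓ + (m : ℤ)) := by
        intro n hn
        rw [Function.mem_support] at hn
        by_cases hle : ℓ ≤ n
        · exact ⟨(n - ℓ).toNat, show ℓ + ((n - ℓ).toNat : ℤ) = n by omega⟩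
        · exact absurd (if_neg hle) hn
      have := hinj.tsum_eq (f := fun n : ℤ => if ℓ ≤ n then F n else 0) h0
      rw [← this]
      apply tsum_congr
      intro m
      beta_reduce
      rw [if_pos (by omega)]
    have e2 : ∑' m : ℕ, F (-(ℓ + m + 1))
        = ∑' n : ℤ, (if ℓ ≤ -n - 1 then F n else 0) := by
      have hinj : Function.Injective (fun m : ℕ => -(ℓ + (m : ℤ) + 1)) :=
        fun x y h => by simpa using h
      have h0 : Function.support (fun n : ℤ => if ℓ ≤ -n - 1 then F n else 0)
          ⊆ Set.range (fun m : ℕ => -(ℓ + (m : ℤ) + 1)) := by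
        intro n hn
        rw [Function.mem_support] at hn
        by_cases hle : ℓ ≤ -n - 1
        · exact ⟨(-n - ℓ - 1).toNat,
            show -(ℓ + ((-n - ℓ - 1).toNat : ℤ) + 1) = n by omega⟩
        · exact absurd (if_neg hle) hn
      have := hinj.tsum_eq (f := fun n : ℤ => if ℓ ≤ -n - 1 then F n else 0) h0
      rw [← this]
      apply tsum_congr
      intro m
      beta_reduce
      rw [if_pos (by omega)]
    rw [Summable.tsum_sub (sA ℓ) (sB ℓ), e1, e2, ← Summable.tsum_sub (sg ℓ) (sg' ℓ)]
  -- identify the whole ℓ-indexed family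
  have hE : ∀ ℓ : ℤ, (∑' m : ℕ,
      (q ^ (-(lam - 2 * (w : ℝ) * ((ℓ : ℝ) + (m : ℝ))) ^ 2 / (4 * (k : ℝ)))
        - q ^ (-(lam + 2 * (w : ℝ) * ((ℓ : ℝ) + (m : ℝ) + 1)) ^ 2 / (4 * (k : ℝ)))))
      = ∑' n : ℤ, G ℓ n := by
    intro ℓ
    rw [tsum_congr (hterm ℓ)]
    exact hrow ℓ
  have hGrow : Summable (fun ℓ : ℤ => ∑' n : ℤ, G ℓ n) :=
    (hGuncurry.hasSum.prod_fiberwise (fun ℓ => (hGsumm ℓ).hasSum)).summable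
  have part2 : Summable (fun ℓ : ℤ => ∑' m : ℕ,
      (q ^ (-(lam - 2 * (w : ℝ) * ((ℓ : ℝ) + (m : ℝ))) ^ 2 / (4 * (k : ℝ)))
        - q ^ (-(lam + 2 * (w : ℝ) * ((ℓ : ℝ) + (m : ℝ) + 1)) ^ 2 / (4 * (k : ℝ))))) :=
    hGrow.congr (fun ℓ => (hE ℓ).symm)
  refine ⟨part1, part2, ?_⟩
  -- column sums
  have hcol : ∀ n : ℤ, (∑' ℓ : ℤ, G ℓ n) = (2 * (n:ℝ) + 1) * F n := by
    intro n
    rcases le_or_gt 0 n with hn | hn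
    · rw [tsum_eq_sum (s := Finset.Icc (-n) n) (fun ℓ hℓ => by
        rw [Finset.mem_Icc] at hℓ
        simp only [hG]
        split_ifs <;> first | exact sub_self _ | (exfalso; omega))]
      have hval : ∀ ℓ ∈ Finset.Icc (-n) n, G ℓ n = F n := by
        intro ℓ hℓ
        rw [Finset.mem_Icc] at hℓ
        simp only [hG]
        rw [if_pos (by omega), if_neg (by omega), sub_zero]
      rw [Finset.sum_congr rfl hval, Finset.sum_const, nsmul_eq_mul, Int.card_Icc]
      have hcast : (((n + 1 - -n).toNat : ℕ) : ℝ) = 2 * (n:ℝ) + 1 := by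
        have hz : (((n + 1 - -n).toNat : ℕ) : ℤ) = 2 * n + 1 := by omega
        exact_mod_cast hz
      rw [hcast]
    · rw [tsum_eq_sum (s := Finset.Icc (n + 1) (-n - 1)) (fun ℓ hℓ => by
        rw [Finset.mem_Icc] at hℓ
        simp only [hG]
        split_ifs <;> first | exact sub_self _ | (exfalso; omega))]
      have hval : ∀ ℓ ∈ Finset.Icc (n + 1) (-n - 1), G ℓ n = -F n := by
        intro ℓ hℓ
        rw [Finset.mem_Icc] at hℓ
        simp only [hG]
        rw [if_neg (by omega), if_pos (by omega), zero_sub]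
      rw [Finset.sum_congr rfl hval, Finset.sum_const, nsmul_eq_mul, Int.card_Icc]
      have hcast : (((-n - 1 + 1 - (n + 1)).toNat : ℕ) : ℝ) = -2 * (n:ℝ) - 1 := by
        have hz : (((-n - 1 + 1 - (n + 1)).toNat : ℕ) : ℤ) = -2 * n - 1 := by omega
        exact_mod_cast hz
      rw [hcast]
      ring
  -- Fubini and final evaluation
  rw [tsum_congr hE]
  rw [(Summable.tsum_comm' hGuncurry hGsumm hGcol).symm.trans (tsum_congr hcol)]
  have hTh : Th w k q lam = ∑' n : ℤ, F n := by
    simp only [Th, hF]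
  have hTh' : Th' w k q lam
      = (∑' n : ℤ, (n:ℝ) * F n) - lam / (2 * (w:ℝ)) * ∑' n : ℤ, F n := by
    simp only [Th', Th, hF]
  have hsplit : (∑' n : ℤ, (2 * (n:ℝ) + 1) * F n)
      = 2 * (∑' n : ℤ, (n:ℝ) * F n) + ∑' n : ℤ, F n := by
    rw [show (fun n : ℤ => (2 * (n:ℝ) + 1) * F n)
        = fun n : ℤ => 2 * ((n:ℝ) * F n) + F n from funext (fun n => by ring)]
    rw [Summable.tsum_add (hnFs.mul_left 2) hFs, tsum_mul_left]
  rw [hsplit, hTh, hTh']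
  field_simp
  ring
end
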